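/- Let F : Δ_A → [0,1]^K be L-Lipschitz. Fix mixed strategies (π¹, …, π^N) ∈ Δ_A^N, let the actions a^j ∈ A be independent with a^j distributed according to π^j, and let μ̂ = (1/N)∑_{j=1}^N e_{a^j}. Then for every player i, | V^i(π¹, …, π^N) − (π^i)ᵀ E[F(μ̂)] | ≤ L√2 / N. -/

import Mathlib

open scoped BigOperators
open MeasureTheory ProbabilityTheory Finset

noncomputable section

/-- The probability simplex over `Fin K`, inside Euclidean space (ℓ2 norm). -/
def simplex (K : ℕ) : Set (EuclideanSpace ℝ (Fin K)) :=
  {x | (∀ a, 0 ≤ x a) ∧ ∑ a, x a = 1}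

/-- Empirical occupancy measure `μ̂ = (1/N) ∑_j e_{a^j}` of an action profile. -/
def empDist (K N : ℕ) (v : Fin N → Fin K) : EuclideanSpace ℝ (Fin K) :=
  (N : ℝ)⁻¹ • ∑ j : Fin N, EuclideanSpace.single (v j) (1 : ℝ)

/-- Expected payoff `V^i(π¹,…,π^N) = E[F(μ̂)(a^i)]`, written as the finite sum over
action profiles weighted by the product of the independent mixed strategies. -/
def Vval (K N : ℕ) (F : EuclideanSpace ℝ (Fin K) → EuclideanSpace ℝ (Fin K))
    (π : Fin N → EuclideanSpace ℝ (Fin K)) (i : Fin N) : ℝ :=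
  ∑ v : Fin N → Fin K, (∏ j : Fin N, π j (v j)) * F (empDist K N v) (v i)

/-- Exploitability `E^i_exp(π¹,…,π^N) = sup_{π′∈Δ} V^i(π′,π^{−i}) − V^i(π¹,…,π^N)`. -/
def expl (K N : ℕ) (F : EuclideanSpace ℝ (Fin K) → EuclideanSpace ℝ (Fin K))
    (π : Fin N → EuclideanSpace ℝ (Fin K)) (i : Fin N) : ℝ :=
  (⨆ p : simplex K, Vval K N F (Function.update π i (p : EuclideanSpace ℝ (Fin K))) i)
    - Vval K N F π i


private lemma coord_le' {K : ℕ} (x : EuclideanSpace ℝ (Fin K)) (a : Fin K) : |x a| ≤ ‖x‖ := by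
  have h : x a = inner ℝ (EuclideanSpace.single a (1:ℝ)) x := by
    simp [EuclideanSpace.inner_single_left]
  rw [h]
  calc |inner ℝ (EuclideanSpace.single a (1:ℝ)) x| ≤ ‖EuclideanSpace.single a (1:ℝ)‖ * ‖x‖ :=
        abs_real_inner_le_norm _ _
    _ = ‖x‖ := by simp [EuclideanSpace.norm_single]

private lemma norm_single_sub' {K : ℕ} (a b : Fin K) :
    ‖(EuclideanSpace.single a (1:ℝ)) - EuclideanSpace.single b 1‖ ≤ Real.sqrt 2 := by
  rcases eq_or_ne a b with rfl | h
  · simp [Real.sqrt_nonneg]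
  · have hsq : ‖(EuclideanSpace.single a (1:ℝ)) - EuclideanSpace.single b 1‖^2 = 2 := by
      rw [norm_sub_sq_real]
      simp [EuclideanSpace.inner_single_left, EuclideanSpace.single_apply,
        (Ne.symm h), EuclideanSpace.norm_single]; norm_num
    nlinarith [norm_nonneg ((EuclideanSpace.single a (1:ℝ)) - EuclideanSpace.single b 1),
      Real.sq_sqrt (by norm_num : (0:ℝ) ≤ 2), Real.sqrt_nonneg 2]

private lemma empDist_apply' (K N : ℕ) (v : Fin N → Fin K) (a : Fin K) :
    empDist K N v a = (N:ℝ)⁻¹ * ∑ j : Fin N, (if a = v j then (1:ℝ) else 0) := by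
  have h : (∑ j : Fin N, EuclideanSpace.single (v j) (1:ℝ)) a
      = ∑ j : Fin N, EuclideanSpace.single (v j) (1:ℝ) a := by rw [WithLp.ofLp_sum]; exact Finset.sum_apply a Finset.univ _
  simp [empDist, PiLp.smul_apply, h, EuclideanSpace.single_apply]

private lemma empDist_mem' (K N : ℕ) (hN : 0 < N) (v : Fin N → Fin K) :
    empDist K N v ∈ simplex K := by
  constructor
  · intro a
    rw [empDist_apply']
    positivity
  · simp only [empDist_apply']
    rw [← Finset.mul_sum, Finset.sum_comm]
    have : ∀ j : Fin N, ∑ a : Fin K, (if a = v j then (1:ℝ) else 0) = 1 := by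
      intro j; simp [eq_comm]
    simp only [this, Finset.sum_const, card_univ, Fintype.card_fin, nsmul_eq_mul, mul_one]
    field_simp

private lemma empDist_update' (K N : ℕ) (v : Fin N → Fin K) (i : Fin N) (b : Fin K) :
    empDist K N (Function.update v i b) - empDist K N v
      = (N:ℝ)⁻¹ • ((EuclideanSpace.single b 1 : EuclideanSpace ℝ (Fin K))
          - EuclideanSpace.single (v i) 1) := by
  rw [empDist, empDist, ← smul_sub]
  congr 1
  have h1 : ∀ j : Fin N, EuclideanSpace.single (Function.update v i b j) (1:ℝ)
      = Function.update (fun j => EuclideanSpace.single (v j) (1:ℝ)) i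
          (EuclideanSpace.single b 1) j := by
    intro j
    rcases eq_or_ne j i with rfl | h
    · simp
    · simp [Function.update_of_ne h]
  rw [Finset.sum_congr rfl (fun j _ => h1 j),
    Finset.sum_update_of_mem (Finset.mem_univ i)]
  have h2 : ∑ j : Fin N, EuclideanSpace.single (v j) (1:ℝ)
      = EuclideanSpace.single (v i) 1 + ∑ j ∈ univ \ {i}, EuclideanSpace.single (v j) (1:ℝ) := by
    rw [← Finset.sum_update_of_mem (Finset.mem_univ i)]
    congr 1
    ext j
    rcases eq_or_ne j i with rfl | h
    · simp
    · simp [Function.update_of_ne h]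
  rw [h2]
  abel

private lemma prod_swap' (K N : ℕ) (π : Fin N → EuclideanSpace ℝ (Fin K)) (i : Fin N)
    (v : Fin N → Fin K) (b : Fin K) :
    (∏ j : Fin N, π j (Function.update v i b j)) * π i (v i)
      = (∏ j : Fin N, π j (v j)) * π i b := by
  have h1 : ∀ w : Fin N → Fin K, ∏ j : Fin N, π j (w j)
      = π i (w i) * ∏ j ∈ univ.erase i, π j (w j) := fun w =>
    (Finset.mul_prod_erase univ (fun j => π j (w j)) (mem_univ i)).symm
  rw [h1, h1 v]
  have h2 : ∏ j ∈ univ.erase i, π j (Function.update v i b j)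
      = ∏ j ∈ univ.erase i, π j (v j) :=
    Finset.prod_congr rfl fun j hj => by
      rw [Function.update_of_ne (Finset.ne_of_mem_erase hj)]
  rw [h2, Function.update_self]
  ring

/-- Lemma 1 of the paper.
If `F : Δ_A → [0,1]^K` is `L`-Lipschitz, then for any strategy profile `(π¹,…,π^N)` and any
player `i`, `|V^i(π¹,…,π^N) − (π^i)ᵀ E[F(μ̂)]| ≤ L√2/N`, where `μ̂` is the empirical measure of
independent actions `a^j ∼ π^j` and `E[F(μ̂)] = ∑_v (∏_j π^j(v_j)) F(μ̂(v))`. -/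
theorem stmt0 (K N : ℕ) (hK : 0 < K) (hN : 0 < N) (L : ℝ) (hL : 0 ≤ L)
    (F : EuclideanSpace ℝ (Fin K) → EuclideanSpace ℝ (Fin K))
    (hFmap : ∀ μ ∈ simplex K, ∀ a : Fin K, F μ a ∈ Set.Icc (0 : ℝ) 1)
    (hFlip : ∀ μ ∈ simplex K, ∀ μ' ∈ simplex K, ‖F μ - F μ'‖ ≤ L * ‖μ - μ'‖)
    (π : Fin N → EuclideanSpace ℝ (Fin K)) (hπ : ∀ j, π j ∈ simplex K) (i : Fin N) :
    |Vval K N F π i -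
        ∑ a : Fin K, π i a *
          (∑ v : Fin N → Fin K, (∏ j : Fin N, π j (v j)) * F (empDist K N v) a)|
      ≤ L * Real.sqrt 2 / N:= by
  classical
  set W : (Fin N → Fin K) → ℝ := fun v => ∏ j : Fin N, π j (v j) with hW
  have hW0 : ∀ v, 0 ≤ W v := fun v => Finset.prod_nonneg fun j _ => (hπ j).1 (v j)
  have hWsum : ∑ v : Fin N → Fin K, W v = 1 := by
    rw [hW, ← Fintype.piFinset_univ, ← Finset.prod_univ_sum]
    simp [fun j => (hπ j).2]
  -- the involution
  have hinv : Function.Involutive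
      (fun p : (Fin N → Fin K) × Fin K => (Function.update p.1 i p.2, p.1 i)) := by
    rintro ⟨v, b⟩
    simp [Function.update_idem]
  set σ : Equiv.Perm ((Fin N → Fin K) × Fin K) := hinv.toPerm _ with hσ
  -- rewrite Vval as a double sum
  have key : Vval K N F π i
      = ∑ p : (Fin N → Fin K) × Fin K,
          W p.1 * π i p.2 * F (empDist K N (Function.update p.1 i p.2)) p.2 := by
    have := Equiv.sum_comp σ (fun p : (Fin N → Fin K) × Fin K =>
      W p.1 * π i p.2 * F (empDist K N (Function.update p.1 i p.2)) p.2)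
    rw [← this]
    have hterm : ∀ p : (Fin N → Fin K) × Fin K,
        W (Function.update p.1 i p.2) * π i (p.1 i)
            * F (empDist K N (Function.update (Function.update p.1 i p.2) i (p.1 i))) (p.1 i)
        = W p.1 * π i p.2 * F (empDist K N p.1) (p.1 i) := by
      rintro ⟨v, b⟩
      simp only [Function.update_idem, Function.update_eq_self]
      rw [prod_swap']
    calc Vval K N F π i = ∑ v : Fin N → Fin K, W v * F (empDist K N v) (v i) := rfl
      _ = ∑ v : Fin N → Fin K, ∑ b : Fin K, W v * π i b * F (empDist K N v) (v i) := by
          refine Finset.sum_congr rfl fun v _ => ?_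
          rw [← Finset.sum_mul, ← Finset.mul_sum]
          rw [(hπ i).2]
          ring
      _ = ∑ p : (Fin N → Fin K) × Fin K, W p.1 * π i p.2 * F (empDist K N p.1) (p.1 i) := by
          rw [Fintype.sum_prod_type]
      _ = _ := by
          refine (Finset.sum_congr rfl fun p _ => ?_).symm
          exact hterm p
  have key2 : (∑ a : Fin K, π i a *
        ∑ v : Fin N → Fin K, (∏ j : Fin N, π j (v j)) * F (empDist K N v) a)
      = ∑ p : (Fin N → Fin K) × Fin K, W p.1 * π i p.2 * F (empDist K N p.1) p.2 := by
    rw [Fintype.sum_prod_type_right]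
    refine Finset.sum_congr rfl fun a _ => ?_
    rw [Finset.mul_sum]
    refine Finset.sum_congr rfl fun v _ => ?_
    ring
  rw [key, key2, ← Finset.sum_sub_distrib]
  have hbound : ∀ p : (Fin N → Fin K) × Fin K,
      |W p.1 * π i p.2 * F (empDist K N (Function.update p.1 i p.2)) p.2
        - W p.1 * π i p.2 * F (empDist K N p.1) p.2|
      ≤ W p.1 * π i p.2 * (L * Real.sqrt 2 / N) := by
    rintro ⟨v, b⟩
    have hπib : 0 ≤ π i b := (hπ i).1 b
    rw [← mul_sub, abs_mul, abs_of_nonneg (mul_nonneg (hW0 v) hπib)]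
    refine mul_le_mul_of_nonneg_left ?_ (mul_nonneg (hW0 v) hπib)
    set μ' := empDist K N (Function.update v i b)
    set μ := empDist K N v
    have h1 : |F μ' b - F μ b| ≤ ‖F μ' - F μ‖ := by
      have : (F μ' - F μ) b = F μ' b - F μ b := rfl
      rw [← this]
      exact coord_le' _ b
    have h2 : ‖F μ' - F μ‖ ≤ L * ‖μ' - μ‖ :=
      hFlip μ' (empDist_mem' K N hN _) μ (empDist_mem' K N hN _)
    have h3 : ‖μ' - μ‖ ≤ Real.sqrt 2 / N := by
      rw [empDist_update', norm_smul]
      rw [Real.norm_eq_abs, abs_of_nonneg (by positivity : (0:ℝ) ≤ (N:ℝ)⁻¹)]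
      rw [div_eq_inv_mul]
      exact mul_le_mul_of_nonneg_left (norm_single_sub' b (v i)) (by positivity)
    calc |F μ' b - F μ b| ≤ L * ‖μ' - μ‖ := h1.trans h2
      _ ≤ L * (Real.sqrt 2 / N) := mul_le_mul_of_nonneg_left h3 hL
      _ = L * Real.sqrt 2 / N := by ring
  calc |∑ p : (Fin N → Fin K) × Fin K,
        (W p.1 * π i p.2 * F (empDist K N (Function.update p.1 i p.2)) p.2
          - W p.1 * π i p.2 * F (empDist K N p.1) p.2)|
      ≤ ∑ p : (Fin N → Fin K) × Fin K,
        |W p.1 * π i p.2 * F (empDist K N (Function.update p.1 i p.2)) p.2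
          - W p.1 * π i p.2 * F (empDist K N p.1) p.2| := Finset.abs_sum_le_sum_abs _ _
    _ ≤ ∑ p : (Fin N → Fin K) × Fin K, W p.1 * π i p.2 * (L * Real.sqrt 2 / N) :=
        Finset.sum_le_sum fun p _ => hbound p
    _ = L * Real.sqrt 2 / N := by
        rw [← Finset.sum_mul, Fintype.sum_prod_type]
        have : ∑ v : Fin N → Fin K, ∑ b : Fin K, W v * π i b
            = ∑ v : Fin N → Fin K, W v := by
          refine Finset.sum_congr rfl fun v _ => ?_
          rw [← Finset.mul_sum, (hπ i).2, mul_one]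
        rw [this, hWsum, one_mul]
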